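/- Let V = V₁ ⊕ ⋯ ⊕ V_k be a direct sum decomposition of a finite-dimensional vector space over a field F, and let g ∈ GL(V) permute the subspaces V₁, …, V_k transitively (so g(V_i) = V_{σ(i)} for a k-cycle σ). Then the degree of the minimal polynomial of g equals k times the degree of the minimal polynomial of g^k restricted to V₁. -/
import Mathlib


open Polynomial

section Aux
variable {F : Type*} [Field F] {V : Type*} [AddCommGroup V] [Module F V]

private lemma aeval_restrict_coe (f : V →ₗ[F] V) (p : Submodule F V)
    (hf : ∀ x ∈ p, f x ∈ p) (q : F[X]) (x : p) :
    ((Polynomial.aeval (f.restrict hf) q) x : V) = Polynomial.aeval f q (x : V) := by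
  induction q using Polynomial.induction_on' with
  | add a b ha hb => simp [ha, hb]
  | monomial n a =>
    rw [Polynomial.aeval_monomial, Polynomial.aeval_monomial, Module.End.mul_apply,
      Module.End.mul_apply, Module.algebraMap_end_apply, Module.algebraMap_end_apply,
      Module.End.pow_restrict n hf, Submodule.coe_smul, LinearMap.restrict_coe_apply]

/-- the `j`-th strand of `p` w.r.t. period `k`. -/
private noncomputable def strand (k : ℕ) (p : F[X]) (j : ℕ) : F[X] :=
  ∑ l ∈ Finset.range (p.natDegree + 1), Polynomial.C (p.coeff (k * l + j)) * Polynomial.X ^ l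

private lemma strand_coeff (k : ℕ) (p : F[X]) (j l : ℕ) :
    (strand k p j).coeff l = if l ≤ p.natDegree then p.coeff (k * l + j) else 0 := by
  simp only [strand, finset_sum_coeff, coeff_C_mul, coeff_X_pow, mul_ite, mul_one, mul_zero]
  rw [Finset.sum_ite_eq (Finset.range (p.natDegree + 1)) l
    (fun l' => p.coeff (k * l' + j))]
  simp [Finset.mem_range, Nat.lt_succ_iff]

private lemma strand_decomp (k : ℕ) (hk : 0 < k) (p : F[X]) :
    p = ∑ j ∈ Finset.range k, Polynomial.X ^ j * Polynomial.expand F k (strand k p j) := by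
  ext n
  rw [finset_sum_coeff, Finset.sum_eq_single (n % k)]
  · rw [X_pow_mul, coeff_mul_X_pow', if_pos (Nat.mod_le n k), coeff_expand hk]
    have hdm : k * (n / k) + n % k = n := Nat.div_add_mod n k
    have hsub : n - n % k = k * (n / k) := by omega
    rw [hsub, if_pos (Dvd.intro _ rfl), Nat.mul_div_cancel_left _ hk, strand_coeff]
    by_cases hle : n / k ≤ p.natDegree
    · rw [if_pos hle, hdm]
    · rw [if_neg hle]
      have : p.natDegree < n := lt_of_lt_of_le (lt_of_not_ge hle) (Nat.div_le_self n k)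
      exact coeff_eq_zero_of_natDegree_lt this
  · intro j hj hne
    rw [X_pow_mul, coeff_mul_X_pow']
    by_cases hjn : j ≤ n
    · rw [if_pos hjn, coeff_expand hk, if_neg]
      intro hdvd
      apply hne
      have : j ≡ n [MOD k] := (Nat.modEq_iff_dvd' hjn).mpr hdvd
      have hj' : j < k := Finset.mem_range.mp hj
      calc j = j % k := (Nat.mod_eq_of_lt hj').symm
        _ = n % k := this
    · rw [if_neg hjn]
  · intro hnot
    exact absurd (Finset.mem_range.mpr (Nat.mod_lt n hk)) hnot

private lemma orbit_mod {k : ℕ} (σ : Equiv.Perm (Fin k)) (i0 : Fin k) {c : ℕ}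
    (hfix : (σ ^ c) i0 = i0) (hc : 0 < c) (n : ℕ) : (σ ^ n) i0 = (σ ^ (n % c)) i0 := by
  have key : ∀ t : ℕ, ((σ ^ c) ^ t) i0 = i0 := by
    intro t
    induction t with
    | zero => rfl
    | succ t ih => rw [pow_succ, Equiv.Perm.mul_apply, hfix, ih]
  conv_lhs => rw [← Nat.div_add_mod n c]
  rw [add_comm, pow_add, Equiv.Perm.mul_apply, pow_mul, key]

private lemma orbit_inj {k : ℕ} (σ : Equiv.Perm (Fin k)) (i0 : Fin k)
    (htrans : ∀ j : Fin k, ∃ n : ℕ, (σ ^ n) i0 = j) :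
    ∀ a ∈ Finset.range k, ∀ b ∈ Finset.range k, (σ ^ a) i0 = (σ ^ b) i0 → a = b := by
  have main : ∀ a b : ℕ, a < b → b < k → (σ ^ a) i0 = (σ ^ b) i0 → False := by
    intro a b hab hbk heq
    set c := b - a with hc
    have hc0 : 0 < c := by omega
    have hfix : (σ ^ c) i0 = i0 := by
      have h1 : (σ ^ b) i0 = (σ ^ a) ((σ ^ c) i0) := by
        rw [← Equiv.Perm.mul_apply, ← pow_add]
        congr 2
        omega
      have h2 : (σ ^ a) ((σ ^ c) i0) = (σ ^ a) i0 := by rw [← h1, heq]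
      exact (Equiv.injective _) h2
    -- every element of Fin k is σ^r i0 for some r < c
    have hsubset : (Finset.univ : Finset (Fin k)) ⊆
        (Finset.range c).image (fun r => (σ ^ r) i0) := by
      intro j _
      obtain ⟨n, hn⟩ := htrans j
      rw [Finset.mem_image]
      exact ⟨n % c, Finset.mem_range.mpr (Nat.mod_lt n hc0),
        by rw [← orbit_mod σ i0 hfix hc0 n, hn]⟩
    have hcard : k ≤ c := by
      calc k = Fintype.card (Fin k) := (Fintype.card_fin k).symm
        _ = (Finset.univ : Finset (Fin k)).card := Finset.card_univ.symm
        _ ≤ ((Finset.range c).image (fun r => (σ ^ r) i0)).card := Finset.card_le_card hsubset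
        _ ≤ (Finset.range c).card := Finset.card_image_le
        _ = c := Finset.card_range c
    omega
  intro a ha b hb heq
  rcases lt_trichotomy a b with h | h | h
  · exact absurd (main a b h (Finset.mem_range.mp hb) heq) (fun x => x)
  · exact h
  · exact absurd (main b a h (Finset.mem_range.mp ha) heq.symm) (fun x => x)

private lemma map_pow_eq {k : ℕ} (W : Fin k → Submodule F V) (g' : V →ₗ[F] V)
    (σ : Equiv.Perm (Fin k)) (hmap : ∀ i, Submodule.map g' (W i) = W (σ i)) :
    ∀ (n : ℕ) (i : Fin k), Submodule.map (g' ^ n) (W i) = W ((σ ^ n) i) := by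
  intro n
  induction n with
  | zero => intro i; simp [Module.End.one_eq_id]
  | succ n ih =>
    intro i
    rw [pow_succ, Module.End.mul_eq_comp, Submodule.map_comp, hmap, ih,
      pow_succ, Equiv.Perm.mul_apply]

end Aux

/-- If `V = V₁ ⊕ ⋯ ⊕ V_k` and `g ∈ GL(V)` permutes the (nonzero) summands
transitively via a `k`-cycle `σ`, then the degree of the minimal polynomial of `g`
is `k` times the degree of the minimal polynomial of `g^k` restricted to a summand. -/
theorem stmt_4 (F : Type*) [Field F] (V : Type*) [AddCommGroup V] [Module F V]
    [FiniteDimensional F V] (k : ℕ) (hk : 0 < k) (W : Fin k → Submodule F V)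
    (hW : DirectSum.IsInternal W) (hne : ∀ i, W i ≠ ⊥)
    (g : V ≃ₗ[F] V) (σ : Equiv.Perm (Fin k)) (hcycle : σ.IsCycle)
    (htrans : ∀ i j : Fin k, ∃ n : ℕ, (σ ^ n) i = j)
    (hmap : ∀ i, Submodule.map (g : V →ₗ[F] V) (W i) = W (σ i))
    (i0 : Fin k)
    (hstab : ∀ x ∈ W i0, ((g : V →ₗ[F] V) ^ k) x ∈ W i0) :
    (minpoly F (g : V →ₗ[F] V)).natDegree =
      k * (minpoly F (((g : V →ₗ[F] V) ^ k).restrict hstab)).natDegree := by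
  classical
  set g' : V →ₗ[F] V := (g : V →ₗ[F] V) with hg'
  set h : W i0 →ₗ[F] W i0 := (g' ^ k).restrict hstab with hh
  set m : F[X] := minpoly F h with hm
  set p : F[X] := minpoly F g' with hpdef
  have hint : IsIntegral F h := LinearMap.isIntegral h
  have hm0 : m ≠ 0 := minpoly.ne_zero hint
  have hintg : IsIntegral F g' := LinearMap.isIntegral g'
  have hp0 : p ≠ 0 := minpoly.ne_zero hintg
  have hmapn : ∀ (n : ℕ) (i : Fin k), Submodule.map (g' ^ n) (W i) = W ((σ ^ n) i) :=
    map_pow_eq W g' σ hmap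
  have hcompat : ∀ (q : F[X]) (x : W i0),
      ((Polynomial.aeval h q) x : V) = Polynomial.aeval (g' ^ k) q (x : V) :=
    fun q x => aeval_restrict_coe (g' ^ k) (W i0) hstab q x
  have hmem : ∀ (q : F[X]) (v : V), v ∈ W i0 → Polynomial.aeval (g' ^ k) q v ∈ W i0 := by
    intro q v hv
    have := hcompat q ⟨v, hv⟩
    rw [← this]
    exact ((Polynomial.aeval h q) ⟨v, hv⟩).2
  -- commutation of polynomials in g'
  have hcomm : ∀ (a b : F[X]),
      Polynomial.aeval g' a * Polynomial.aeval g' b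
        = Polynomial.aeval g' b * Polynomial.aeval g' a := by
    intro a b
    rw [← map_mul, ← map_mul, mul_comm]
  -- Upper bound : minpoly g divides expand k m
  have hupper : Polynomial.aeval g' (Polynomial.expand F k m) = 0 := by
    have htop : (⊤ : Submodule F V) ≤
        LinearMap.ker (Polynomial.aeval g' (Polynomial.expand F k m)) := by
      rw [← hW.submodule_iSup_eq_top]
      refine iSup_le fun i => ?_
      intro v hv
      obtain ⟨n, hn⟩ := htrans i0 i
      rw [← hn, ← hmapn] at hv
      obtain ⟨w, hw, rfl⟩ := hv
      rw [LinearMap.mem_ker]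
      have e1 : Polynomial.aeval g' ((Polynomial.X : F[X]) ^ n) = g' ^ n := by
        rw [map_pow, Polynomial.aeval_X]
      have e2 : Polynomial.aeval g' (Polynomial.expand F k m) ((g' ^ n) w)
          = (g' ^ n) (Polynomial.aeval g' (Polynomial.expand F k m) w) := by
        rw [← Module.End.mul_apply, ← Module.End.mul_apply, ← e1, hcomm]
      rw [e2]
      have e3 : Polynomial.aeval g' (Polynomial.expand F k m) w = 0 := by
        rw [Polynomial.expand_aeval, ← hcompat m ⟨w, hw⟩, hm, minpoly.aeval]
        rfl
      rw [e3, map_zero]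
    exact LinearMap.ker_eq_top.mp (top_le_iff.mp htop)
  have hdvd1 : p ∣ Polynomial.expand F k m := minpoly.dvd F g' hupper
  have hle : p.natDegree ≤ k * m.natDegree := by
    have := Polynomial.natDegree_le_of_dvd hdvd1 ((Polynomial.expand_ne_zero hk).mpr hm0)
    rwa [Polynomial.natDegree_expand, mul_comm] at this
  -- Lower bound
  set n0 : ℕ := p.natDegree with hn0
  set j0 : ℕ := n0 % k with hj0
  set q : F[X] := strand k p j0 with hq
  have hdm : k * (n0 / k) + n0 % k = n0 := Nat.div_add_mod n0 k
  have hq0 : q ≠ 0 := by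
    intro hqz
    have hc : q.coeff (n0 / k) = p.coeff n0 := by
      rw [hq, strand_coeff, if_pos (Nat.div_le_self n0 k)]
      congr 1
    rw [hqz, Polynomial.coeff_zero] at hc
    exact Polynomial.leadingCoeff_ne_zero.mpr hp0 (by rw [Polynomial.leadingCoeff, ← hn0, ← hc])
  have hqdeg : q.natDegree ≤ n0 / k := by
    refine Polynomial.natDegree_le_iff_coeff_eq_zero.mpr fun l hl => ?_
    rw [hq, strand_coeff]
    by_cases hle' : l ≤ p.natDegree
    · rw [if_pos hle']
      apply Polynomial.coeff_eq_zero_of_natDegree_lt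
      have h1 : k * (n0 / k + 1) ≤ k * l := Nat.mul_le_mul_left k hl
      have h4 : k * (n0 / k + 1) = k * (n0 / k) + k := by ring
      rw [← hn0]
      have hj0k : j0 < k := Nat.mod_lt n0 hk
      omega
    · rw [if_neg hle']
  -- the strand q is annihilated by h
  have hzero : Polynomial.aeval h q = 0 := by
    refine LinearMap.ext fun x => Subtype.ext ?_
    rw [hcompat]
    have hv := x.2
    set v : V := (x : V) with hvdef
    -- main sum identity
    have h1 : Polynomial.aeval g' p v = 0 := by rw [hpdef, minpoly.aeval]; rfl
    rw [strand_decomp k hk p] at h1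
    rw [map_sum] at h1
    have h2 : ∑ j ∈ Finset.range k,
        (g' ^ j) (Polynomial.aeval (g' ^ k) (strand k p j) v) = 0 := by
      rw [← h1, LinearMap.sum_apply]
      refine Finset.sum_congr rfl fun j _ => ?_
      rw [map_mul, Polynomial.aeval_X_pow, Module.End.mul_apply, Polynomial.expand_aeval]
    set y : ℕ → V := fun j => (g' ^ j) (Polynomial.aeval (g' ^ k) (strand k p j) v) with hy
    have hymem : ∀ j, y j ∈ W ((σ ^ j) i0) := by
      intro j
      rw [← hmapn j i0]
      exact Submodule.mem_map_of_mem (hmem (strand k p j) v hv)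
    have hj0mem : j0 ∈ Finset.range k := Finset.mem_range.mpr (Nat.mod_lt n0 hk)
    have hsplit : y j0 + ∑ j ∈ (Finset.range k).erase j0, y j = 0 := by
      rw [Finset.add_sum_erase _ y hj0mem]; exact h2
    have hrest : ∑ j ∈ (Finset.range k).erase j0, y j ∈
        ⨆ (i : Fin k) (_ : i ≠ (σ ^ j0) i0), W i := by
      refine Submodule.sum_mem _ fun j hj => ?_
      have hjne : (σ ^ j) i0 ≠ (σ ^ j0) i0 := by
        intro hcon
        exact (Finset.ne_of_mem_erase hj)
          (orbit_inj σ i0 (htrans i0) j (Finset.mem_of_mem_erase hj) j0 hj0mem hcon)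
      exact Submodule.mem_iSup_of_mem _ (Submodule.mem_iSup_of_mem hjne (hymem j))
    have hdisj : Disjoint (W ((σ ^ j0) i0))
        (⨆ (i : Fin k) (_ : i ≠ (σ ^ j0) i0), W i) := hW.submodule_iSupIndep ((σ ^ j0) i0)
    have hyj0 : y j0 = 0 := by
      have hmem2 : y j0 ∈ ⨆ (i : Fin k) (_ : i ≠ (σ ^ j0) i0), W i := by
        have : y j0 = -∑ j ∈ (Finset.range k).erase j0, y j := by
          rw [eq_neg_iff_add_eq_zero]; exact hsplit
        rw [this]
        exact Submodule.neg_mem _ hrest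
      exact (Submodule.disjoint_def.mp hdisj) (y j0) (hymem j0) hmem2
    -- cancel g'^j0
    have hinj : Function.Injective (g' ^ j0 : V →ₗ[F] V) := by
      have hg : Function.Injective g' := g.injective
      intro a b hab
      rw [Module.End.pow_apply, Module.End.pow_apply] at hab
      exact Function.Injective.iterate hg j0 hab
    have : Polynomial.aeval (g' ^ k) (strand k p j0) v = 0 := by
      apply hinj
      rw [map_zero]
      exact hyj0
    rw [← hq] at this
    rw [this]
    rfl
  have hdvd2 : m ∣ q := minpoly.dvd F h hzero
  have hdeg2 : m.natDegree ≤ q.natDegree := Polynomial.natDegree_le_of_dvd hdvd2 hq0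
  have hge : k * m.natDegree ≤ n0 := by
    have h3 : k * m.natDegree ≤ k * (n0 / k) :=
      Nat.mul_le_mul_left k (le_trans hdeg2 hqdeg)
    omega
  exact le_antisymm hle hge
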